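/- Let R ⊂ ℕ (positive integers) be closed under addition with gcd(R) = 1. Then there exist a, b ∈ R with gcd(a,b) = 1. -/

import Mathlib

theorem stmt_6 (R : Set ℕ) (hpos : ∀ n ∈ R, 0 < n)
    (hadd : ∀ a ∈ R, ∀ b ∈ R, a + b ∈ R)
    (hgcd : ∀ d : ℕ, (∀ n ∈ R, d ∣ n) → d = 1) :
    ∃ a ∈ R, ∃ b ∈ R, Nat.gcd a b = 1 := by
  classical
  -- The additive submonoid (in ℕ) generated by R is R ∪ {0}
  have hM : ∀ x ∈ AddSubmonoid.closure R, x = 0 ∨ x ∈ R := by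
    intro x hx
    induction hx using AddSubmonoid.closure_induction with
    | mem y hy => exact Or.inr hy
    | zero => exact Or.inl rfl
    | add a b _ _ ha hb =>
      rcases ha with ha | ha
      · rcases hb with hb | hb
        · exact Or.inl (by simp [ha, hb])
        · exact Or.inr (by simpa [ha] using hb)
      · rcases hb with hb | hb
        · exact Or.inr (by simpa [hb] using ha)
        · exact Or.inr (hadd a ha b hb)
  -- The subgroup of ℤ generated by R
  set H : AddSubgroup ℤ := AddSubgroup.closure ((fun n : ℕ => (n : ℤ)) '' R) with hH
  obtain ⟨g, hg⟩ := Int.subgroup_cyclic H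
  -- g divides every element of R
  have hdvd : ∀ n ∈ R, g.natAbs ∣ n := by
    intro n hn
    have hnH : (n : ℤ) ∈ H := AddSubgroup.subset_closure ⟨n, hn, rfl⟩
    rw [hg, AddSubgroup.mem_closure_singleton] at hnH
    obtain ⟨k, hk⟩ := hnH
    have hdg : g ∣ (n : ℤ) := Dvd.intro_left k (by rw [← hk]; exact (zsmul_eq_mul g k).symm ▸ rfl)
    exact Int.natCast_dvd_natCast.mp ((Int.natAbs_dvd.mpr hdg))
  have hg1 : g.natAbs = 1 := hgcd _ hdvd
  -- hence 1 ∈ H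
  have h1H : (1 : ℤ) ∈ H := by
    rw [hg, AddSubgroup.mem_closure_singleton]
    rcases Int.natAbs_eq g with h | h
    · refine ⟨1, ?_⟩
      rw [one_zsmul, h, hg1]; norm_num
    · refine ⟨-1, ?_⟩
      rw [h, hg1]; norm_num
  -- every element of H is a difference of two elements of the monoid closure of R
  have hdiff : ∀ z ∈ H, ∃ s t : ℕ, s ∈ AddSubmonoid.closure R ∧
      t ∈ AddSubmonoid.closure R ∧ z = (s : ℤ) - t := by
    intro z hz
    rw [hH] at hz
    induction hz using AddSubgroup.closure_induction with
    | mem y hy =>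
      obtain ⟨n, hn, rfl⟩ := hy
      exact ⟨n, 0, AddSubmonoid.subset_closure hn, (AddSubmonoid.closure R).zero_mem, by simp⟩
    | zero => exact ⟨0, 0, (AddSubmonoid.closure R).zero_mem, (AddSubmonoid.closure R).zero_mem, by simp⟩
    | add a b _ _ ha hb =>
      obtain ⟨s, t, hs, ht, rfl⟩ := ha
      obtain ⟨u, v, hu, hv, rfl⟩ := hb
      exact ⟨s + u, t + v, (AddSubmonoid.closure R).add_mem hs hu,
        (AddSubmonoid.closure R).add_mem ht hv, by push_cast; ring⟩
    | neg a _ ha =>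
      obtain ⟨s, t, hs, ht, rfl⟩ := ha
      exact ⟨t, s, ht, hs, by ring⟩
  obtain ⟨s, t, hs, ht, hst⟩ := hdiff 1 h1H
  have hst' : s = t + 1 := by omega
  rcases hM s hs with h0 | hsR
  · omega
  rcases hM t ht with h0 | htR
  · -- t = 0, so s = 1 ∈ R
    subst h0
    refine ⟨s, hsR, s, hsR, ?_⟩
    simp [hst']
  · exact ⟨s, hsR, t, htR, by rw [hst']; simp [Nat.gcd_comm, Nat.gcd_self_add_left]⟩
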